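/- Let A ⊆ ℕ\{1\} and suppose L(A) ∪ {0} contains a 2-dimensional linear subspace M. Set n_1 = min{ |L_z| : z ∈ M, z ≠ 0 } and n_2 = max{ |L_z| : z ∈ M }. Then the open interval (n_2 − n_1, n_2) intersects A. -/

import Mathlib

open Filter Topology Set ENNReal

noncomputable section

/-- The set of accumulation points of a real sequence: limits of convergent subsequences. -/
def accPts (x : ℕ → ℝ) : Set ℝ :=
  {a | ∃ φ : ℕ → ℕ, StrictMono φ ∧ Tendsto (fun k => x (φ k)) atTop (𝓝 a)}


/-- The space ℓ∞ of bounded real sequences. -/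
abbrev Linf : Type := ↥(lp (fun _ : ℕ => ℝ) ∞)

/-- Accumulation points of an element of ℓ∞. -/
def accPtsL (z : Linf) : Set ℝ := accPts (fun n => z n)

/-- Joint accumulation points of a pair of sequences. -/
def jointAcc (x y : ℕ → ℝ) : Set (ℝ × ℝ) :=
  {p | ∃ φ : ℕ → ℕ, StrictMono φ ∧ Tendsto (fun k => (x (φ k), y (φ k))) atTop (𝓝 p)}

lemma jointAcc_subset_prod (x y : ℕ → ℝ) : jointAcc x y ⊆ accPts x ×ˢ accPts y := by
  rintro ⟨a, b⟩ ⟨φ, hφ, hlim⟩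
  refine ⟨⟨φ, hφ, ?_⟩, ⟨φ, hφ, ?_⟩⟩
  · exact (continuous_fst.tendsto _).comp hlim
  · exact (continuous_snd.tendsto _).comp hlim

lemma accPts_comb {x y : ℕ → ℝ} {Cx Cy : ℝ} (hx : ∀ n, |x n| ≤ Cx) (hy : ∀ n, |y n| ≤ Cy)
    (α β : ℝ) :
    accPts (fun n => α * x n + β * y n) =
      (fun p : ℝ × ℝ => α * p.1 + β * p.2) '' jointAcc x y := by
  have hcont : Continuous fun p : ℝ × ℝ => α * p.1 + β * p.2 :=
    (continuous_const.mul continuous_fst).add (continuous_const.mul continuous_snd)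
  ext c
  constructor
  · rintro ⟨φ, hφ, hlim⟩
    have hmem : ∀ k, (x (φ k), y (φ k)) ∈ Metric.closedBall (0 : ℝ × ℝ) (max Cx Cy) := by
      intro k
      rw [Metric.mem_closedBall, dist_zero_right, Prod.norm_def]
      simp only [Real.norm_eq_abs]
      exact max_le_max (hx _) (hy _)
    obtain ⟨p, -, ψ, hψ, hlim2⟩ :=
      (isCompact_closedBall (0 : ℝ × ℝ) (max Cx Cy)).tendsto_subseq hmem
    refine ⟨p, ⟨φ ∘ ψ, hφ.comp hψ, hlim2⟩, ?_⟩
    exact tendsto_nhds_unique ((hcont.tendsto p).comp hlim2) (hlim.comp hψ.tendsto_atTop)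
  · rintro ⟨p, ⟨φ, hφ, hlim⟩, rfl⟩
    exact ⟨φ, hφ, (hcont.tendsto p).comp hlim⟩

lemma accPts_const (c : ℝ) : accPts (fun _ => c) = {c} := by
  ext a
  constructor
  · rintro ⟨φ, hφ, hlim⟩
    exact tendsto_nhds_unique hlim tendsto_const_nhds
  · rintro rfl
    exact ⟨id, strictMono_id, tendsto_const_nhds⟩

lemma accPts_const_mul {c : ℝ} (hc : c ≠ 0) (z : ℕ → ℝ) :
    accPts (fun n => c * z n) = (c * ·) '' accPts z := by
  ext a
  constructor
  · rintro ⟨φ, hφ, hlim⟩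
    refine ⟨c⁻¹ * a, ⟨φ, hφ, ?_⟩, by field_simp⟩
    have h2 := hlim.const_mul c⁻¹
    simpa [← mul_assoc, inv_mul_cancel₀ hc] using h2
  · rintro ⟨b, ⟨φ, hφ, hlim⟩, rfl⟩
    exact ⟨φ, hφ, hlim.const_mul c⟩

/-- A generic direction is injective on a finite planar set. -/
lemma exists_generic (S : Finset (ℝ × ℝ)) :
    ∃ τ : ℝ, (S.image fun p : ℝ × ℝ => (-τ) * p.1 + p.2).card = S.card := by
  classical
  obtain ⟨τ, hτ⟩ := Infinite.exists_notMem_finset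
    ((S ×ˢ S).image fun pq : (ℝ × ℝ) × ℝ × ℝ => (pq.2.2 - pq.1.2) / (pq.2.1 - pq.1.1))
  refine ⟨τ, Finset.card_image_iff.mpr ?_⟩
  intro p hp q hq hpq
  simp only at hpq
  by_cases h1 : p.1 = q.1
  · have h2 : p.2 = q.2 := by
      rw [h1] at hpq; linarith
    exact Prod.ext h1 h2
  · exfalso
    apply hτ
    rw [Finset.mem_image]
    refine ⟨(p, q), Finset.mem_product.mpr ⟨Finset.mem_coe.mp hp, Finset.mem_coe.mp hq⟩, ?_⟩
    rw [div_eq_iff (sub_ne_zero.mpr (Ne.symm h1))]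
    linarith

/-- The key combinatorial lemma: taking the steepest connecting direction. -/
lemma combo (S : Finset (ℝ × ℝ)) (n₁ : ℕ) (hcol : (S.image fun p : ℝ × ℝ => p.1).card = n₁)
    (h2 : 2 ≤ n₁) :
    ∃ τ : ℝ, S.card - n₁ < (S.image fun p : ℝ × ℝ => (-τ) * p.1 + p.2).card ∧
      (S.image fun p : ℝ × ℝ => (-τ) * p.1 + p.2).card < S.card := by
  classical
  set P := (S ×ˢ S).filter (fun pq : (ℝ × ℝ) × ℝ × ℝ => pq.1.1 < pq.2.1) with hP
  have hPne : P.Nonempty := by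
    obtain ⟨a, ha, b, hb, hab⟩ := Finset.one_lt_card.mp
      (show 1 < (S.image fun p : ℝ × ℝ => p.1).card by omega)
    obtain ⟨p, hp, rfl⟩ := Finset.mem_image.mp ha
    obtain ⟨q, hq, rfl⟩ := Finset.mem_image.mp hb
    rcases lt_or_gt_of_ne hab with h | h
    · exact ⟨(p, q), Finset.mem_filter.mpr ⟨Finset.mem_product.mpr ⟨hp, hq⟩, h⟩⟩
    · exact ⟨(q, p), Finset.mem_filter.mpr ⟨Finset.mem_product.mpr ⟨hq, hp⟩, h⟩⟩
  set slopes := P.image (fun pq : (ℝ × ℝ) × ℝ × ℝ => (pq.2.2 - pq.1.2) / (pq.2.1 - pq.1.1))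
    with hsl
  have hslne : slopes.Nonempty := hPne.image _
  set τ := slopes.max' hslne with hτdef
  set h := fun p : ℝ × ℝ => (-τ) * p.1 + p.2 with hhdef
  have key : ∀ p ∈ S, ∀ q ∈ S, p.1 < q.1 → q.2 - p.2 ≤ τ * (q.1 - p.1) := by
    intro p hp q hq hlt
    have hmem : (q.2 - p.2) / (q.1 - p.1) ∈ slopes := Finset.mem_image.mpr
      ⟨(p, q), Finset.mem_filter.mpr ⟨Finset.mem_product.mpr ⟨hp, hq⟩, hlt⟩, rfl⟩
    have hle := Finset.le_max' slopes _ hmem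
    rwa [div_le_iff₀ (by linarith)] at hle
  have key2 : ∀ p ∈ S, ∀ q ∈ S, p.1 < q.1 → h q ≤ h p := by
    intro p hp q hq hlt
    have h1 := key p hp q hq hlt
    have h3 : τ * (q.1 - p.1) = τ * q.1 - τ * p.1 := by ring
    simp only [hhdef]
    linarith
  -- an equality pair for the maximum slope
  obtain ⟨pq, hpqP, hpqτ⟩ := Finset.mem_image.mp (Finset.max'_mem slopes hslne)
  obtain ⟨hpqS, hpqlt⟩ := Finset.mem_filter.mp hpqP
  obtain ⟨hp1, hq1⟩ := Finset.mem_product.mp hpqS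
  have heq : h pq.1 = h pq.2 := by
    have h0 : pq.2.1 - pq.1.1 ≠ 0 := sub_ne_zero.mpr (ne_of_gt hpqlt)
    rw [div_eq_iff h0] at hpqτ
    have h3 : τ * (pq.2.1 - pq.1.1) = τ * pq.2.1 - τ * pq.1.1 := by ring
    simp only [hhdef]
    linarith
  have hne : pq.1 ≠ pq.2 := fun e => absurd (congrArg Prod.fst e) (ne_of_lt hpqlt)
  set m := (S.image h).card with hmdef
  have hmlt : m < S.card := by
    rcases lt_or_eq_of_le (Finset.card_image_le (s := S) (f := h)) with h' | h'
    · exact h'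
    · exact absurd (Finset.card_image_iff.mp h' (Finset.mem_coe.mpr hp1)
        (Finset.mem_coe.mpr hq1) heq) hne
  -- the staircase bound
  set C := S.image h with hC
  set A1 := S.image (fun p : ℝ × ℝ => p.1) with hA1
  set rc := fun v : ℝ => (C.filter fun w => w < v).card with hrc
  set ra := fun a : ℝ => (A1.filter fun b => a < b).card with hra
  have hrc_lt : ∀ v ∈ C, rc v < m := by
    intro v hv
    apply Finset.card_lt_card
    rw [Finset.ssubset_iff_of_subset (Finset.filter_subset _ _)]
    exact ⟨v, hv, by simp⟩
  have hra_lt : ∀ a ∈ A1, ra a < n₁ := by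
    intro a ha
    rw [← hcol]
    apply Finset.card_lt_card
    rw [Finset.ssubset_iff_of_subset (Finset.filter_subset _ _)]
    exact ⟨a, ha, by simp⟩
  have hrc_mono : ∀ v ∈ C, ∀ w ∈ C, v < w → rc v < rc w := by
    intro v hv w hw hvw
    apply Finset.card_lt_card
    rw [Finset.ssubset_iff_of_subset (by
      intro u hu
      rw [Finset.mem_filter] at hu ⊢
      exact ⟨hu.1, hu.2.trans hvw⟩)]
    exact ⟨v, Finset.mem_filter.mpr ⟨hv, hvw⟩, by simp⟩
  have hra_anti : ∀ a b : ℝ, a ≤ b → ra b ≤ ra a := by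
    intro a b hab
    apply Finset.card_le_card
    intro u hu
    rw [Finset.mem_filter] at hu ⊢
    exact ⟨hu.1, lt_of_le_of_lt hab hu.2⟩
  have hra_strict : ∀ a ∈ A1, ∀ b ∈ A1, a < b → ra b < ra a := by
    intro a ha b hb hab
    apply Finset.card_lt_card
    rw [Finset.ssubset_iff_of_subset (by
      intro u hu
      rw [Finset.mem_filter] at hu ⊢
      exact ⟨hu.1, hab.trans hu.2⟩)]
    exact ⟨b, Finset.mem_filter.mpr ⟨hb, hab⟩, by simp⟩
  have hcard : S.card ≤ m + n₁ - 1 := by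
    have hinj : Set.InjOn (fun p : ℝ × ℝ => rc (h p) + ra p.1) ↑S := by
      intro p hp q hq hpq
      simp only at hpq
      have hp' := Finset.mem_coe.mp hp
      have hq' := Finset.mem_coe.mp hq
      have hhp : h p ∈ C := Finset.mem_image_of_mem _ hp'
      have hhq : h q ∈ C := Finset.mem_image_of_mem _ hq'
      have hap : p.1 ∈ A1 := Finset.mem_image_of_mem _ hp'
      have haq : q.1 ∈ A1 := Finset.mem_image_of_mem _ hq'
      rcases lt_trichotomy (h p) (h q) with hlt | heq' | hlt
      · exfalso
        have hq1p1 : q.1 ≤ p.1 := by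
          by_contra hcon
          exact absurd (key2 p hp' q hq' (lt_of_not_ge hcon)) (not_le.mpr hlt)
        have hr1 := hrc_mono _ hhp _ hhq hlt
        have hr2 := hra_anti q.1 p.1 hq1p1
        omega
      · rcases lt_trichotomy p.1 q.1 with hlt1 | heq1 | hlt1
        · exfalso
          have := hra_strict _ hap _ haq hlt1
          rw [heq'] at hpq
          omega
        · have h22 : p.2 = q.2 := by
            simp only [hhdef] at heq'
            rw [heq1] at heq'
            linarith
          exact Prod.ext heq1 h22
        · exfalso
          have := hra_strict _ haq _ hap hlt1
          rw [heq'] at hpq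
          omega
      · exfalso
        have hq1p1 : p.1 ≤ q.1 := by
          by_contra hcon
          exact absurd (key2 q hq' p hp' (lt_of_not_ge hcon)) (not_le.mpr hlt)
        have hr1 := hrc_mono _ hhq _ hhp hlt
        have hr2 := hra_anti p.1 q.1 hq1p1
        omega
    have hmaps : ∀ p ∈ S, rc (h p) + ra p.1 ∈ Finset.range (m + n₁ - 1) := by
      intro p hp
      have hr1 := hrc_lt _ (Finset.mem_image_of_mem _ hp)
      have hr2 := hra_lt _ (Finset.mem_image_of_mem _ hp)
      rw [Finset.mem_range]
      omega
    have := Finset.card_le_card_of_injOn _ hmaps hinj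
    simpa using this
  have hSne : S.Nonempty := by
    obtain ⟨pq', hpq'⟩ := hPne
    exact ⟨pq'.1, (Finset.mem_product.mp (Finset.mem_filter.mp hpq').1).1⟩
  have hmpos : 1 ≤ m := Finset.card_pos.mpr (hSne.image h)
  refine ⟨τ, ?_, hmlt⟩
  have hfin : (S.image fun p : ℝ × ℝ => (-τ) * p.1 + p.2).card = m := rfl
  omega

lemma coe_comb (x y : Linf) (α β : ℝ) :
    (fun n => (α • x + β • y : Linf) n) = fun n => α * x n + β * y n := by
  funext n
  simp [lp.coeFn_add, lp.coeFn_smul]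
  rfl

lemma indep_of_not_mem_span {x y : Linf} (hy0 : y ≠ 0) (hx : x ∉ Submodule.span ℝ {y}) :
    ∀ α β : ℝ, α • x + β • y = 0 → α = 0 ∧ β = 0 := by
  intro α β h
  have hα : α = 0 := by
    by_contra hα
    apply hx
    have h1 : α • x = -(β • y) := eq_neg_of_add_eq_zero_left h
    have h2 : x = α⁻¹ • (-(β • y)) := by
      rw [← h1, smul_smul, inv_mul_cancel₀ hα, one_smul]
    rw [h2]
    exact Submodule.smul_mem _ _ (Submodule.neg_mem _
      (Submodule.smul_mem _ _ (Submodule.mem_span_singleton_self y)))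
  refine ⟨hα, ?_⟩
  rw [hα, zero_smul, zero_add] at h
  rcases smul_eq_zero.mp h with h' | h'
  · exact h'
  · exact absurd h' hy0

lemma core {A : Set ℕ} {M : Submodule ℝ Linf}
    (hM : ∀ z ∈ M, z ≠ 0 → (accPtsL z).Finite ∧ (accPtsL z).ncard ∈ A)
    {n₁ n₂ : ℕ} {x y : Linf} (hxM : x ∈ M) (hyM : y ∈ M)
    (hind : ∀ α β : ℝ, α • x + β • y = 0 → α = 0 ∧ β = 0)
    (hx : (accPtsL x).ncard = n₁) (hy : (accPtsL y).ncard = n₂)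
    (h2 : 2 ≤ n₁)
    (hmax : ∀ z ∈ M, (accPtsL z).ncard ≤ n₂) :
    ∃ m ∈ A, n₂ - n₁ < m ∧ m < n₂ := by
  classical
  have hx0 : x ≠ 0 := by
    intro h
    exact one_ne_zero (hind 1 0 (by simp [h])).1
  have hy0 : y ≠ 0 := by
    intro h
    exact one_ne_zero (hind 0 1 (by simp [h])).2
  have hbx : ∀ n, |(x : ∀ _ : ℕ, ℝ) n| ≤ ‖x‖ := fun n => by
    have h := lp.norm_apply_le_norm (E := fun _ : ℕ => ℝ) ENNReal.top_ne_zero x n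
    rwa [Real.norm_eq_abs] at h
  have hby : ∀ n, |(y : ∀ _ : ℕ, ℝ) n| ≤ ‖y‖ := fun n => by
    have h := lp.norm_apply_le_norm (E := fun _ : ℕ => ℝ) ENNReal.top_ne_zero y n
    rwa [Real.norm_eq_abs] at h
  have hSfin : (jointAcc (fun n => x n) (fun n => y n)).Finite :=
    Set.Finite.subset (((hM x hxM hx0).1).prod ((hM y hyM hy0).1))
      (jointAcc_subset_prod _ _)
  set Sf := hSfin.toFinset with hSf
  have hcnt : ∀ α β : ℝ, (accPtsL (α • x + β • y)).ncard
      = (Sf.image fun p : ℝ × ℝ => α * p.1 + β * p.2).card := by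
    intro α β
    have h1 : accPtsL (α • x + β • y)
        = (fun p : ℝ × ℝ => α * p.1 + β * p.2) '' jointAcc (fun n => x n) (fun n => y n) := by
      rw [accPtsL, coe_comb]
      exact accPts_comb hbx hby α β
    rw [h1, ← Set.Finite.coe_toFinset hSfin, ← Finset.coe_image, Set.ncard_coe_finset]
  have hcol : (Sf.image fun p : ℝ × ℝ => p.1).card = n₁ := by
    have h1 := hcnt 1 0
    rw [show ((1 : ℝ) • x + (0 : ℝ) • y) = x from by simp, hx] at h1
    rw [h1]
    exact congrArg Finset.card (Finset.image_congr (fun p _ => by ring))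
  have hsnd : (Sf.image fun p : ℝ × ℝ => p.2).card = n₂ := by
    have h1 := hcnt 0 1
    rw [show ((0 : ℝ) • x + (1 : ℝ) • y) = y from by simp, hy] at h1
    rw [h1]
    exact congrArg Finset.card (Finset.image_congr (fun p _ => by ring))
  have hcard : Sf.card = n₂ := by
    refine le_antisymm ?_ ?_
    · obtain ⟨τ, hτ⟩ := exists_generic Sf
      have h1 := hcnt (-τ) 1
      rw [show (Sf.image fun p : ℝ × ℝ => (-τ) * p.1 + 1 * p.2)
          = Sf.image fun p : ℝ × ℝ => (-τ) * p.1 + p.2 from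
        Finset.image_congr (fun p _ => by ring), hτ] at h1
      rw [← h1]
      exact hmax _ (M.add_mem (M.smul_mem _ hxM) (M.smul_mem _ hyM))
    · rw [← hsnd]
      exact Finset.card_image_le
  obtain ⟨τ, hlo, hhi⟩ := combo Sf n₁ hcol h2
  set z := (-τ) • x + (1 : ℝ) • y with hz
  have hzM : z ∈ M := M.add_mem (M.smul_mem _ hxM) (M.smul_mem _ hyM)
  have hz0 : z ≠ 0 := fun h => one_ne_zero (hind _ _ h).2
  have hzcnt : (accPtsL z).ncard = (Sf.image fun p : ℝ × ℝ => (-τ) * p.1 + p.2).card := by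
    rw [hz, hcnt (-τ) 1]
    exact congrArg Finset.card (Finset.image_congr (fun p _ => by ring))
  refine ⟨(accPtsL z).ncard, (hM z hzM hz0).2, ?_, ?_⟩
  · rw [hzcnt, ← hcard]
    exact hlo
  · rw [hzcnt, ← hcard]
    exact hhi

theorem interval_intersects_of_dim_two (A : Set ℕ) (hA : A ⊆ {n | 2 ≤ n})
    (M : Submodule ℝ Linf) (hdim : Module.finrank ℝ M = 2)
    (hM : ∀ z ∈ M, z ≠ 0 → (accPtsL z).Finite ∧ (accPtsL z).ncard ∈ A)
    (n₁ n₂ : ℕ)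
    (hn₁ : (∃ z ∈ M, z ≠ 0 ∧ (accPtsL z).ncard = n₁) ∧
           (∀ z ∈ M, z ≠ 0 → n₁ ≤ (accPtsL z).ncard))
    (hn₂ : (∃ z ∈ M, (accPtsL z).ncard = n₂) ∧
           (∀ z ∈ M, (accPtsL z).ncard ≤ n₂)) :
    ∃ m ∈ A, n₂ - n₁ < m ∧ m < n₂ := by
  classical
  obtain ⟨⟨z₁, hz₁M, hz₁0, hz₁⟩, hmin⟩ := hn₁
  obtain ⟨⟨z₂, hz₂M, hz₂⟩, hmax⟩ := hn₂
  have hn₁A : n₁ ∈ A := hz₁ ▸ (hM z₁ hz₁M hz₁0).2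
  have h2 : 2 ≤ n₁ := hA hn₁A
  have h12 : n₁ ≤ n₂ := by
    have := hmax z₁ hz₁M
    rwa [hz₁] at this
  have hz₂0 : z₂ ≠ 0 := by
    intro h
    rw [h] at hz₂
    have h1 : accPtsL (0 : Linf) = {0} := by
      rw [accPtsL]
      have h2' : (fun n => (0 : Linf) n) = fun _ : ℕ => (0 : ℝ) := by
        funext n
        simp
      rw [h2', accPts_const]
    rw [h1, Set.ncard_singleton] at hz₂
    omega
  by_cases hmem : z₁ ∈ Submodule.span ℝ {z₂}
  · -- dependent case: n₁ = n₂
    obtain ⟨c, hc⟩ := Submodule.mem_span_singleton.mp hmem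
    have hc0 : c ≠ 0 := by
      rintro rfl
      rw [zero_smul] at hc
      exact hz₁0 hc.symm
    have heq : n₁ = n₂ := by
      have h1 : accPtsL z₁ = (c * ·) '' accPtsL z₂ := by
        rw [accPtsL, accPtsL, ← accPts_const_mul hc0]
        congr 1
        funext n
        rw [← hc]
        simp [lp.coeFn_smul]
      rw [← hz₁, ← hz₂, h1, Set.ncard_image_of_injective _ (mul_right_injective₀ hc0)]
    obtain ⟨x, hxM, hxns⟩ : ∃ x ∈ M, x ∉ Submodule.span ℝ {z₂} := by
      by_contra hcon
      push_neg at hcon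
      have hFD : FiniteDimensional ℝ ↥(Submodule.span ℝ {z₂}) := inferInstance
      have hle : M ≤ Submodule.span ℝ {z₂} := hcon
      have hfr := Submodule.finrank_mono (R := ℝ) hle
      rw [hdim, finrank_span_singleton hz₂0] at hfr
      omega
    have hx0 : x ≠ 0 := fun h => hxns (h ▸ Submodule.zero_mem _)
    have hxn : (accPtsL x).ncard = n₁ :=
      le_antisymm (heq ▸ hmax x hxM) (hmin x hxM hx0)
    exact core hM hxM hz₂M (indep_of_not_mem_span hz₂0 hxns) hxn hz₂ h2 hmax
  · exact core hM hz₁M hz₂M (indep_of_not_mem_span hz₂0 hmem) hz₁ hz₂ h2 hmax
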